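/- The interval (n - 2√n, n) contains a prime for every integer n ≥ 4 if and only if p_k - p_{k-1} < 2√(p_k) holds for every prime p_k ≥ 3, where p_{k-1} denotes the largest prime below p_k. -/
import Mathlib


def PrevPrime (p p' : ℕ) : Prop :=
  p'.Prime ∧ p' < p ∧ ∀ r : ℕ, r.Prime → r < p → r ≤ p'

lemma mono_aux {a b : ℝ} (ha : 1 ≤ a) (hab : a ≤ b) :
    a - 2 * Real.sqrt a ≤ b - 2 * Real.sqrt b := by
  have ha0 : (0:ℝ) ≤ a := by linarith
  have hb0 : (0:ℝ) ≤ b := by linarith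
  have hsa := Real.sq_sqrt ha0
  have hsb := Real.sq_sqrt hb0
  have h1 : 1 ≤ Real.sqrt a := by
    have := Real.sqrt_le_sqrt (show (1:ℝ) ≤ a from ha)
    simpa [Real.sqrt_one] using this
  have h2 : Real.sqrt a ≤ Real.sqrt b := Real.sqrt_le_sqrt hab
  nlinarith [mul_nonneg (sub_nonneg.2 h2) (show (0:ℝ) ≤ Real.sqrt a + Real.sqrt b - 2 by linarith)]

theorem stmt7 :
    (∀ n : ℕ, 4 ≤ n → ∃ m : ℕ, m.Prime ∧ (n : ℝ) - 2 * Real.sqrt n < m ∧ m < n) ↔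
    (∀ p p' : ℕ, p.Prime → 3 ≤ p → PrevPrime p p' → (p : ℝ) - p' < 2 * Real.sqrt p) := by
  constructor
  · intro h p p' hp hp3 hp'
    by_cases hp3' : p = 3
    · subst hp3'
      have h2 : p' = 2 := by
        have h1 := hp'.1.two_le
        have h2 := hp'.2.1
        omega
      subst h2
      have : (1:ℝ) ≤ Real.sqrt 3 := by
        rw [show (1:ℝ) = Real.sqrt 1 from Real.sqrt_one.symm]
        exact Real.sqrt_le_sqrt (by norm_num)
      push_cast
      linarith
    · have hp4 : 4 ≤ p := by omega
      obtain ⟨m, hm, hlt, hmp⟩ := h p hp4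
      have hle : m ≤ p' := hp'.2.2 m hm hmp
      have : (m:ℝ) ≤ p' := by exact_mod_cast hle
      linarith
  · intro h n hn
    have hex : ∃ q : ℕ, n ≤ q ∧ q.Prime := by
      obtain ⟨q, hq1, hq2⟩ := Nat.exists_infinite_primes n
      exact ⟨q, hq1, hq2⟩
    classical
    set p := Nat.find hex with hpdef
    obtain ⟨hnp, hpp⟩ := Nat.find_spec hex
    set p' := Nat.findGreatest Nat.Prime (p - 1) with hp'def
    have h3p : 3 ≤ p - 1 := by omega
    have hle3 : 3 ≤ p' := Nat.le_findGreatest h3p Nat.prime_three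
    have hp'le : p' ≤ p - 1 := Nat.findGreatest_le _
    have hp'prime : p'.Prime := Nat.findGreatest_spec (by omega) Nat.prime_three
    have hprev : PrevPrime p p' := by
      refine ⟨hp'prime, by omega, fun r hr hrp => ?_⟩
      exact Nat.le_findGreatest (by omega) hr
    have hgap := h p p' hpp (by omega) hprev
    have hp'n : p' < n := by
      by_contra hc
      push_neg at hc
      have := Nat.find_min' hex ⟨hc, hp'prime⟩
      omega
    refine ⟨p', hp'prime, ?_, hp'n⟩
    have hmono : (n:ℝ) - 2 * Real.sqrt n ≤ (p:ℝ) - 2 * Real.sqrt p := by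
      apply mono_aux
      · exact_mod_cast (show (1:ℕ) ≤ n by omega)
      · exact_mod_cast hnp
    linarith
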